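/- For any ν > 0, ε > 0, and k > 0 satisfying k² ≥ W(2/(πε²))/(2ν²), where W is the principal branch of the Lambert W function, one has |sgn(x) − erf(kx)| ≤ ε for all x with |x| ≥ ν. -/

import Mathlib

open MeasureTheory Real Set Filter Topology

lemma gauss_integrable : Integrable fun t : ℝ => Real.exp (-t ^ 2) := by
  simpa [neg_mul, one_mul] using integrable_exp_neg_mul_sq (one_pos : (0:ℝ) < 1)

lemma tail_mul_eq (y : ℝ) :
    ∫ t in Ioi y, t * Real.exp (-t ^ 2) = Real.exp (-y ^ 2) / 2 := by
  have hderiv : ∀ t ∈ Ici y,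
      HasDerivAt (fun t : ℝ => -Real.exp (-t ^ 2) / 2) (t * Real.exp (-t ^ 2)) t := by
    intro t _
    have h : HasDerivAt (fun t : ℝ => -t ^ 2) (-(2 * t)) t := by
      have h0 : HasDerivAt (fun x : ℝ => x ^ 2) (2 * t) t := by simpa using hasDerivAt_pow 2 t
      exact h0.neg
    have := (h.exp.neg).div_const 2
    have this : HasDerivAt (fun t : ℝ => -Real.exp (-t ^ 2) / 2) (-(Real.exp (-t ^ 2) * -(2 * t)) / 2) t := this
    convert this using 1
    ring
  have hint : IntegrableOn (fun t : ℝ => t * Real.exp (-t ^ 2)) (Ioi y) := by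
    have := integrable_mul_exp_neg_mul_sq (one_pos : (0:ℝ) < 1)
    simpa [neg_mul, one_mul] using this.integrableOn
  have htend : Tendsto (fun t : ℝ => -Real.exp (-t ^ 2) / 2) atTop (𝓝 0) := by
    have h1 : Tendsto (fun t : ℝ => -t ^ 2) atTop atBot := by
      simpa using (tendsto_pow_atTop (n := 2) two_ne_zero).neg
    have := (Real.tendsto_exp_atBot.comp h1).neg.div_const 2
    simpa using this
  have := integral_Ioi_of_hasDerivAt_of_tendsto' hderiv hint htend
  rw [this]; ring

lemma tail_le (y : ℝ) (hy : 0 < y) :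
    ∫ t in Ioi y, Real.exp (-t ^ 2) ≤ Real.exp (-y ^ 2) / (2 * y) := by
  have hmono : ∫ t in Ioi y, Real.exp (-t ^ 2)
      ≤ ∫ t in Ioi y, (t / y) * Real.exp (-t ^ 2) := by
    apply setIntegral_mono_on gauss_integrable.integrableOn
    · have := integrable_mul_exp_neg_mul_sq (one_pos : (0:ℝ) < 1)
      have h2 : IntegrableOn (fun t : ℝ => t * Real.exp (-t ^ 2)) (Ioi y) := by
        simpa [neg_mul, one_mul] using this.integrableOn
      have := h2.div_const y
      simpa [div_mul_eq_mul_div, mul_div_assoc, IntegrableOn] using this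
    · exact measurableSet_Ioi
    · intro t ht
      have h1 : 1 ≤ t / y := (one_le_div hy).mpr (le_of_lt ht)
      nlinarith [Real.exp_pos (-t ^ 2)]
  calc ∫ t in Ioi y, Real.exp (-t ^ 2)
      ≤ ∫ t in Ioi y, (t / y) * Real.exp (-t ^ 2) := hmono
    _ = (∫ t in Ioi y, t * Real.exp (-t ^ 2)) / y := by
        rw [← integral_div]
        congr 1; ext t; ring
    _ = Real.exp (-y ^ 2) / (2 * y) := by
        rw [tail_mul_eq]; field_simp

lemma erf_tail (y : ℝ) (hy : 0 ≤ y) :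
    ∫ t in (0:ℝ)..y, Real.exp (-t ^ 2)
      = Real.sqrt Real.pi / 2 - ∫ t in Ioi y, Real.exp (-t ^ 2) := by
  have hsplit : (∫ t in Ioc 0 y, Real.exp (-t ^ 2)) + ∫ t in Ioi y, Real.exp (-t ^ 2)
      = ∫ t in Ioi (0:ℝ), Real.exp (-t ^ 2) := by
    rw [← setIntegral_union (Ioc_disjoint_Ioi le_rfl) measurableSet_Ioi
      gauss_integrable.integrableOn gauss_integrable.integrableOn,
      Ioc_union_Ioi_eq_Ioi hy]
  have hgauss : ∫ t in Ioi (0:ℝ), Real.exp (-t ^ 2) = Real.sqrt Real.pi / 2 := by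
    have := integral_gaussian_Ioi 1
    simpa [neg_mul, one_mul] using this
  rw [intervalIntegral.integral_of_le hy]
  linarith [hsplit, hgauss]

/-- The Gauss error function. -/
noncomputable def erf (y : ℝ) : ℝ :=
  (2 / Real.sqrt Real.pi) * ∫ t in (0:ℝ)..y, Real.exp (-t ^ 2)

lemma erf_neg (y : ℝ) : erf (-y) = -erf y := by
  unfold erf
  have : ∫ t in (0:ℝ)..(-y), Real.exp (-t ^ 2) = -∫ t in (0:ℝ)..y, Real.exp (-t ^ 2) := by
    have h := intervalIntegral.integral_comp_neg (a := -y) (b := (0:ℝ))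
      (f := fun t => Real.exp (-t ^ 2))
    simp only [neg_sq, neg_zero, neg_neg] at h
    rw [← h, ← intervalIntegral.integral_symm]
  rw [this]; ring

lemma one_sub_erf (y : ℝ) (hy : 0 ≤ y) :
    1 - erf y = (2 / Real.sqrt Real.pi) * ∫ t in Ioi y, Real.exp (-t ^ 2) := by
  unfold erf
  rw [erf_tail y hy]
  have hπ : Real.sqrt Real.pi ≠ 0 := by positivity
  field_simp
  ring

/-- If `k² ≥ W(2/(πε²))/(2ν²)`, where `W` is the principal Lambert W function
(characterized by `w·e^w = 2/(πε²)` with `w ≥ 0`), then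
`|sgn(x) − erf(kx)| ≤ ε` whenever `|x| ≥ ν`. -/
theorem sgn_erf_approx (ν ε k w : ℝ) (hν : 0 < ν) (hε : 0 < ε) (hk : 0 < k)
    (hw : w * Real.exp w = 2 / (Real.pi * ε ^ 2)) (hw0 : 0 ≤ w)
    (hk2 : w / (2 * ν ^ 2) ≤ k ^ 2) :
    ∀ x : ℝ, ν ≤ |x| → |Real.sign x - erf (k * x)| ≤ ε := by
  have hπ : (0:ℝ) < Real.pi := Real.pi_pos
  have hwpos : 0 < w := by
    rcases hw0.lt_or_eq with h | h
    · exact h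
    · exfalso
      rw [← h] at hw
      have h2 : (0:ℝ) < 2 / (Real.pi * ε ^ 2) := by positivity
      simp at hw
      linarith
  -- main estimate for positive argument
  have key : ∀ y : ℝ, ν ≤ y → |1 - erf (k * y)| ≤ ε := by
    intro y hy
    have hy0 : 0 < y := lt_of_lt_of_le hν hy
    have hky : 0 < k * y := mul_pos hk hy0
    have hsq : w / 2 ≤ (k * y) ^ 2 := by
      have h1 : w / 2 ≤ k ^ 2 * ν ^ 2 := by
        rw [div_le_iff₀ (by positivity)] at hk2
        nlinarith
      have hsqy : ν ^ 2 ≤ y ^ 2 := by nlinarith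
      have h2 : k ^ 2 * ν ^ 2 ≤ (k * y) ^ 2 := by
        rw [mul_pow]
        exact mul_le_mul_of_nonneg_left hsqy (sq_nonneg k)
      linarith
    have htail := tail_le (k * y) hky
    have htail0 : 0 ≤ ∫ t in Ioi (k * y), Real.exp (-t ^ 2) :=
      setIntegral_nonneg measurableSet_Ioi (fun t _ => (Real.exp_pos _).le)
    have heq := one_sub_erf (k * y) hky.le
    have h1 : 1 - erf (k * y) ≤ (2 / Real.sqrt Real.pi) * (Real.exp (-(k * y) ^ 2) / (2 * (k * y))) := by
      rw [heq]
      apply mul_le_mul_of_nonneg_left htail (by positivity)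
    have h0 : 0 ≤ 1 - erf (k * y) := by
      rw [heq]; positivity
    rw [abs_of_nonneg h0]
    refine h1.trans ?_
    -- show (2/√π) * (exp(-(ky)²)/(2ky)) ≤ ε
    set z := (k * y) ^ 2 with hz
    have hzpos : 0 < z := by positivity
    have hsπ : 0 < Real.sqrt Real.pi := Real.sqrt_pos.mpr hπ
    have hsπ2 : Real.sqrt Real.pi ^ 2 = Real.pi := Real.sq_sqrt hπ.le
    have hlhs : (2 / Real.sqrt Real.pi) * (Real.exp (-z) / (2 * (k * y)))
        = Real.exp (-z) / (Real.sqrt Real.pi * (k * y)) := by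
      field_simp
    rw [hlhs]
    rw [div_le_iff₀ (by positivity)]
    -- exp(-z) ≤ ε * (√π * ky). Square both sides.
    have hexp2 : Real.exp (-z) ^ 2 = Real.exp (-(2 * z)) := by
      rw [← Real.exp_nat_mul]; ring_nf
    -- w e^w ≤ 2z e^{2z}
    have hmono : w * Real.exp w ≤ 2 * z * Real.exp (2 * z) := by
      have h1 : w ≤ 2 * z := by linarith
      have h2 : Real.exp w ≤ Real.exp (2 * z) := Real.exp_le_exp.mpr h1
      nlinarith [Real.exp_pos w, Real.exp_pos (2 * z)]
    -- hence exp(-2z) ≤ ε² π z  ... since ε² π = 2/(w e^w)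
    have hεπ : ε ^ 2 * Real.pi * (w * Real.exp w) = 2 := by
      rw [hw]; field_simp
    have hsq2 : Real.exp (-z) ^ 2 ≤ (ε * (Real.sqrt Real.pi * (k * y))) ^ 2 := by
      rw [hexp2]
      have hrhs : (ε * (Real.sqrt Real.pi * (k * y))) ^ 2 = ε ^ 2 * Real.pi * z := by
        rw [hz]; rw [mul_pow, mul_pow, hsπ2]; ring
      rw [hrhs]
      have he2z : Real.exp (-(2 * z)) = 1 / Real.exp (2 * z) := by
        rw [Real.exp_neg, one_div]
      rw [he2z, div_le_iff₀ (Real.exp_pos _)]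
      -- 1 ≤ ε² π z e^{2z}; know ε² π (w e^w) = 2, w e^w ≤ 2 z e^{2z}
      have : ε ^ 2 * Real.pi * (2 * z * Real.exp (2 * z)) ≥ 2 := by
        calc ε ^ 2 * Real.pi * (2 * z * Real.exp (2 * z))
            ≥ ε ^ 2 * Real.pi * (w * Real.exp w) := by
              apply mul_le_mul_of_nonneg_left hmono (by positivity)
          _ = 2 := hεπ
      clear htail htail0 heq h1 h0 hlhs hw hk2
      nlinarith [this]
    have hrpos : 0 < ε * (Real.sqrt Real.pi * (k * y)) := by positivity
    exact (pow_le_pow_iff_left₀ (Real.exp_pos (-z)).le hrpos.le two_ne_zero).mp hsq2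
  intro x hx
  rcases lt_trichotomy x 0 with hneg | hzero | hpos
  · have hx' : ν ≤ -x := by rwa [abs_of_neg hneg] at hx
    have := key (-x) hx'
    rw [Real.sign_of_neg hneg]
    have : |1 - erf (k * -x)| ≤ ε := this
    rw [mul_neg, erf_neg] at this
    calc |(-1 : ℝ) - erf (k * x)| = |1 - -erf (k * x)| := by rw [abs_sub_comm]; ring_nf
      _ ≤ ε := this
  · exfalso; rw [hzero, abs_zero] at hx; linarith
  · have hx' : ν ≤ x := by rwa [abs_of_pos hpos] at hx
    rw [Real.sign_of_pos hpos]
    exact key x hx'
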